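/- arXiv:math/0511431 — 2 statements merged into one kernel-verified Lean document; each statement's English description precedes it below -/
import Mathlib

section
/- The number of nilpotent elements α in IS_n with 1 not in dom(α) equals |IS_{n-1}|. -/
def IsPInj (n : ℕ) (f : Fin n → Option (Fin n)) : Prop :=
  ∀ a b c, f a = some c → f b = some c → a = b

instance (n : ℕ) : DecidablePred (IsPInj n) := fun _ =>
  inferInstanceAs (Decidable (∀ _ _ _, _ → _ → _))

/-- The symmetric inverse semigroup `IS_n`: partial injective maps on `{1,…,n}`. -/
def PInj (n : ℕ) := {f : Fin n → Option (Fin n) // IsPInj n f}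

instance (n : ℕ) : Fintype (PInj n) := Subtype.fintype _

/-- `iterMap n f k x` is `f^k(x)` as a partial map. -/
def iterMap (n : ℕ) (f : Fin n → Option (Fin n)) : ℕ → Fin n → Option (Fin n)
  | 0, x => some x
  | k + 1, x => (f x).bind (iterMap n f k)

/-- Size of the domain of a partial injection. -/
def domCard (n : ℕ) (α : PInj n) : ℕ :=
  (Finset.univ.filter (fun x => α.val x ≠ none)).card

/-- `α` is nilpotent: some positive power is the empty map. -/
def Nilpotent (n : ℕ) (α : PInj n) : Prop :=
  ∃ k, 0 < k ∧ ∀ x, iterMap n α.val k x = none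

/-- `|IS_m| = ∑_j binom(m,j)^2 j!`. -/
def cardIS (m : ℕ) : ℕ := ∑ j ∈ Finset.range (m + 1), (m.choose j) ^ 2 * j.factorial




set_option linter.unusedSectionVars false
section Gen
variable {X : Type*} [DecidableEq X] [Fintype X]

/-- partial injectivity -/
def PIg (f : X → Option X) : Prop := ∀ a b c, f a = some c → f b = some c → a = b

/-- iterate of a partial map -/
def itg (f : X → Option X) : ℕ → X → Option X
  | 0, x => some x
  | k + 1, x => (f x).bind (itg f k)

theorem itg_add (f : X → Option X) (a b : ℕ) (x : X) :
    itg f (a + b) x = (itg f a x).bind (itg f b) := by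
  induction a generalizing x with
  | zero => simp [itg]
  | succ a ih =>
    have : a + 1 + b = (a + b) + 1 := by omega
    rw [this]
    show (f x).bind (itg f (a + b)) = ((f x).bind (itg f a)).bind (itg f b)
    rw [Option.bind_assoc]
    congr 1
    funext y
    exact ih y

theorem itg_succ' (f : X → Option X) (a : ℕ) (x : X) :
    itg f (a + 1) x = (itg f a x).bind f := by
  rw [itg_add]
  congr 1
  funext y
  show (f y).bind (itg f 0) = f y
  cases f y <;> rfl

theorem itg_some_of_add (f : X → Option X) {a b : ℕ} {x : X} {z : X}
    (h : itg f (a + b) x = some z) : ∃ y, itg f a x = some y := by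
  rw [itg_add] at h
  cases hy : itg f a x with
  | none => rw [hy] at h; simp at h
  | some y => exact ⟨y, rfl⟩

theorem itg_none_add (f : X → Option X) {a : ℕ} (b : ℕ) {x : X}
    (h : itg f a x = none) : itg f (a + b) x = none := by
  rw [itg_add, h]; rfl

/-- nilpotency as bounded statement -/
def NilB (f : X → Option X) : Prop := ∀ x, itg f (Fintype.card X) x = none

/-- cyclic point -/
def Cyc (f : X → Option X) (x : X) : Prop := ∃ k, 0 < k ∧ itg f k x = some x

theorem cyc_mul (f : X → Option X) {k : ℕ} {x : X} (h : itg f k x = some x) :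
    ∀ m, itg f (m * k) x = some x := by
  intro m
  induction m with
  | zero => simp [itg]
  | succ m ih => rw [Nat.succ_mul, itg_add, ih]; exact h

theorem cyc_not_dies (f : X → Option X) {x : X} (hc : Cyc f x) {K : ℕ}
    (hK : itg f K x = none) : False := by
  obtain ⟨k, hk, hit⟩ := hc
  have h1 : itg f (K * k) x = some x := cyc_mul f hit K
  have h2 : itg f (K + (K * k - K)) x = none := itg_none_add f _ hK
  have : K + (K * k - K) = K * k := by
    have : K ≤ K * k := Nat.le_mul_of_pos_right K hk
    omega
  rw [this, h1] at h2
  exact nomatch h2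

/-- if the orbit survives `card X` steps, it contains a cyclic point -/
theorem cyc_of_long (f : X → Option X) {x : X} {w : X}
    (h : itg f (Fintype.card X) x = some w) :
    ∃ i ≤ Fintype.card X, ∃ z, itg f i x = some z ∧ Cyc f z := by
  -- all prefixes are some
  have hpre : ∀ i ≤ Fintype.card X, ∃ y, itg f i x = some y := by
    intro i hi
    have : Fintype.card X = i + (Fintype.card X - i) := by omega
    rw [this] at h
    exact itg_some_of_add f h
  -- define g : Fin (card X + 1) → X
  choose g hg using fun i : Fin (Fintype.card X + 1) => hpre i (by omega)
  have : ¬ Function.Injective g := by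
    intro hinj
    have := Fintype.card_le_of_injective g hinj
    simp at this
  rw [Function.not_injective_iff] at this
  obtain ⟨i, j, hij, hne⟩ := this
  -- wlog i < j
  rcases Nat.lt_or_ge (i : ℕ) (j : ℕ) with hlt | hge
  · refine ⟨i, by omega, g i, hg i, ?_⟩
    refine ⟨(j : ℕ) - (i : ℕ), by omega, ?_⟩
    have h1 : itg f ((i : ℕ) + ((j:ℕ) - (i:ℕ))) x = some (g j) := by
      have : (i : ℕ) + ((j:ℕ) - (i:ℕ)) = (j : ℕ) := by omega
      rw [this]; exact hg j
    rw [itg_add, hg i] at h1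
    simp only [Option.bind_some] at h1
    rw [hij] at h1 ⊢
    exact h1
  · have hlt : (j : ℕ) < (i : ℕ) := by
      rcases Nat.lt_or_ge (j:ℕ) (i:ℕ) with h' | h'
      · exact h'
      · exfalso; exact hne (Fin.ext (by omega))
    refine ⟨j, by omega, g j, hg j, ?_⟩
    refine ⟨(i : ℕ) - (j : ℕ), by omega, ?_⟩
    have h1 : itg f ((j : ℕ) + ((i:ℕ) - (j:ℕ))) x = some (g i) := by
      have : (j : ℕ) + ((i:ℕ) - (j:ℕ)) = (i : ℕ) := by omega
      rw [this]; exact hg i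
    rw [itg_add, hg j] at h1
    rw [hij] at h1
    simp only [Option.bind_some] at h1
    rw [← hij] at h1 ⊢
    exact h1

/-- the ∃-form of nilpotency is equivalent to the bounded form -/
theorem nil_iff (f : X → Option X) :
    (∃ k, 0 < k ∧ ∀ x, itg f k x = none) ↔ NilB f := by
  constructor
  · rintro ⟨k, hk, hall⟩ x
    by_contra hne
    cases hw : itg f (Fintype.card X) x with
    | none => exact hne hw
    | some w =>
      obtain ⟨i, hi, z, hz, hcyc⟩ := cyc_of_long f hw
      exact cyc_not_dies f hcyc (hall z)
  · intro hb
    exact ⟨Fintype.card X + 1, by omega, fun x => itg_none_add f 1 (hb x)⟩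


theorem nilB_of_none {f : X → Option X} {k : ℕ} (hk : ∀ x, itg f k x = none) : NilB f :=
  (nil_iff f).1 ⟨k + 1, by omega, fun x => itg_none_add f 1 (hk x)⟩

/-- `S` is closed under `f`. -/
def ClosedF (f : X → Option X) (S : Finset X) : Prop :=
  ∀ x ∈ S, ∀ y, f x = some y → y ∈ S

/-- restriction of `f` to a subset -/
def resF (f : X → Option X) (S : Finset X) : ↥S → Option ↥S :=
  fun x => (f ↑x).bind (fun y => if h : y ∈ S then some ⟨y, h⟩ else none)

theorem map_val_resF {f : X → Option X} {S : Finset X} (hS : ClosedF f S) (x : ↥S) :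
    Option.map Subtype.val (resF f S x) = f ↑x := by
  unfold resF
  cases hy : f ↑x with
  | none => rfl
  | some y =>
    have : y ∈ S := hS ↑x x.2 y hy
    simp [this]

theorem resF_some {f : X → Option X} {S : Finset X} {x : ↥S} {y : X} (hy : f ↑x = some y)
    (hyS : y ∈ S) : resF f S x = some ⟨y, hyS⟩ := by
  unfold resF; simp [hy, hyS]

theorem resF_none {f : X → Option X} {S : Finset X} {x : ↥S} (hy : f ↑x = none) :
    resF f S x = none := by
  unfold resF; simp [hy]

theorem PIg_resF {f : X → Option X} {S : Finset X} (hf : PIg f) : PIg (resF f S) := by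
  intro a b c hac hbc
  unfold resF at hac hbc
  cases ha : f ↑a with
  | none => rw [ha] at hac; simp at hac
  | some ya =>
    cases hb : f ↑b with
    | none => rw [hb] at hbc; simp at hbc
    | some yb =>
      rw [ha] at hac; rw [hb] at hbc
      simp only [Option.bind_some] at hac hbc
      by_cases hya : ya ∈ S
      · by_cases hyb : yb ∈ S
        · simp [hya] at hac; simp [hyb] at hbc
          have hya2 : (c : X) = ya := by rw [← hac]
          have hyb2 : (c : X) = yb := by rw [← hbc]
          have : ya = yb := hya2 ▸ hyb2
          subst this
          exact Subtype.ext (hf ↑a ↑b ya ha hb)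
        · simp [hyb] at hbc
      · simp [hya] at hac

theorem itg_resF {f : X → Option X} {S : Finset X} (hS : ClosedF f S) (k : ℕ) (x : ↥S) :
    Option.map Subtype.val (itg (resF f S) k x) = itg f k ↑x := by
  induction k generalizing x with
  | zero => rfl
  | succ k ih =>
    show Option.map _ ((resF f S x).bind _) = (f ↑x).bind _
    cases hy : f ↑x with
    | none => rw [resF_none hy]; rfl
    | some y =>
      have hyS : y ∈ S := hS ↑x x.2 y hy
      rw [resF_some hy hyS]
      simp only [Option.bind_some]
      exact ih ⟨y, hyS⟩

theorem NilB_resF {f : X → Option X} {S : Finset X} (hS : ClosedF f S) (hf : NilB f) :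
    NilB (resF f S) := by
  apply nilB_of_none (k := Fintype.card X)
  intro x
  have := itg_resF hS (Fintype.card X) x
  rw [hf ↑x] at this
  exact Option.map_eq_none_iff.mp this

theorem itg_mem_closed {f : X → Option X} {S : Finset X} (hS : ClosedF f S) {x z : X}
    (hx : x ∈ S) {k : ℕ} (h : itg f k x = some z) : z ∈ S := by
  induction k generalizing x with
  | zero => cases h; exact hx
  | succ k ih =>
    cases hy : f x with
    | none => unfold itg at h; rw [hy] at h; simp at h
    | some y =>
      unfold itg at h; rw [hy] at h; simp only [Option.bind_some] at h
      exact ih (hS x hx y hy) h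


open Classical in
/-- the set of cyclic points -/
noncomputable def CycSet (f : X → Option X) : Finset X :=
  Finset.univ.filter (fun x => Cyc f x)

theorem mem_cycSet {f : X → Option X} {x : X} : x ∈ CycSet f ↔ Cyc f x := by
  classical
  simp [CycSet]

/-- a cyclic point has a cyclic successor -/
theorem cyc_succ {f : X → Option X} {x : X} (h : Cyc f x) :
    ∃ y, f x = some y ∧ Cyc f y := by
  obtain ⟨k, hk, hit⟩ := h
  obtain ⟨k', rfl⟩ : ∃ k', k = k' + 1 := ⟨k - 1, by omega⟩
  have h1 : (f x).bind (itg f k') = some x := hit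
  cases hy : f x with
  | none => rw [hy] at h1; simp at h1
  | some y =>
    rw [hy] at h1; simp only [Option.bind_some] at h1
    refine ⟨y, rfl, k' + 1, by omega, ?_⟩
    rw [itg_succ', h1]
    exact hy

/-- a cyclic point has a cyclic predecessor -/
theorem cyc_pred {f : X → Option X} {y : X} (h : Cyc f y) :
    ∃ p, f p = some y ∧ Cyc f p := by
  obtain ⟨k, hk, hit⟩ := h
  obtain ⟨k', rfl⟩ : ∃ k', k = k' + 1 := ⟨k - 1, by omega⟩
  rw [itg_succ'] at hit
  cases hp : itg f k' y with
  | none => rw [hp] at hit; simp at hit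
  | some p =>
    rw [hp] at hit; simp only [Option.bind_some] at hit
    refine ⟨p, hit, k' + 1, by omega, ?_⟩
    show (f p).bind _ = some p
    rw [hit]
    simpa using hp

theorem closed_cycSet {f : X → Option X} : ClosedF f (CycSet f) := by
  intro x hx y hy
  rw [mem_cycSet] at hx ⊢
  obtain ⟨y', hy', hcy⟩ := cyc_succ hx
  rw [hy] at hy'
  cases hy'
  exact hcy

theorem closed_cycSet_compl {f : X → Option X} (hf : PIg f) : ClosedF f (CycSet f)ᶜ := by
  intro x hx y hy
  rw [Finset.mem_compl, mem_cycSet] at hx ⊢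
  intro hcy
  obtain ⟨p, hp, hcp⟩ := cyc_pred hcy
  have : p = x := hf p x y hp hy
  subst this
  exact hx hcp

/-- non-cyclic points die -/
theorem nilB_res_compl_cycSet {f : X → Option X} (hf : PIg f) :
    NilB (resF f (CycSet f)ᶜ) := by
  apply nilB_of_none (k := Fintype.card X)
  intro x
  have hcl := closed_cycSet_compl hf
  have h := itg_resF hcl (Fintype.card X) x
  cases hw : itg f (Fintype.card X) ↑x with
  | none => rw [hw] at h; exact Option.map_eq_none_iff.mp h
  | some w =>
    exfalso
    obtain ⟨i, hi, z, hz, hcyc⟩ := cyc_of_long f hw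
    have hzc : z ∈ (CycSet f)ᶜ := itg_mem_closed hcl (x.2) hz
    rw [Finset.mem_compl, mem_cycSet] at hzc
    exact hzc hcyc

/-- gluing functions on a set and its complement -/
def glueF (S : Finset X) (g1 : ↥S → Option ↥S) (g2 : ↥(Sᶜ) → Option ↥(Sᶜ)) :
    X → Option X := fun x =>
  if h : x ∈ S then Option.map Subtype.val (g1 ⟨x, h⟩)
  else Option.map Subtype.val (g2 ⟨x, Finset.mem_compl.mpr h⟩)

theorem glueF_mem {S : Finset X} {g1 g2} {x : X} (h : x ∈ S) :
    glueF S g1 g2 x = Option.map Subtype.val (g1 ⟨x, h⟩) := by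
  unfold glueF; rw [dif_pos h]

theorem glueF_not_mem {S : Finset X} {g1 g2} {x : X} (h : x ∉ S) :
    glueF S g1 g2 x = Option.map Subtype.val (g2 ⟨x, Finset.mem_compl.mpr h⟩) := by
  unfold glueF; rw [dif_neg h]

theorem closed_glueF_left {S : Finset X} {g1 g2} : ClosedF (glueF S g1 g2) S := by
  intro x hx y hy
  rw [glueF_mem hx] at hy
  cases hg : g1 ⟨x, hx⟩ with
  | none => rw [hg] at hy; simp at hy
  | some z => rw [hg] at hy; simp at hy; rw [← hy]; exact z.2

theorem closed_glueF_right {S : Finset X} {g1 g2} : ClosedF (glueF S g1 g2) Sᶜ := by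
  intro x hx y hy
  rw [Finset.mem_compl] at hx
  rw [glueF_not_mem hx] at hy
  cases hg : g2 ⟨x, _⟩ with
  | none => rw [hg] at hy; simp at hy
  | some z => rw [hg] at hy; simp at hy; rw [← hy]; exact z.2

theorem resF_glueF_left {S : Finset X} {g1 g2} (x : ↥S) :
    resF (glueF S g1 g2) S x = g1 x := by
  have h1 : glueF S g1 g2 ↑x = Option.map Subtype.val (g1 x) := by
    rw [glueF_mem x.2]
  unfold resF
  rw [h1]
  cases hg : g1 x with
  | none => rfl
  | some z => simp [z.2]

theorem resF_glueF_right {S : Finset X} {g1 g2} (x : ↥(Sᶜ)) :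
    resF (glueF S g1 g2) Sᶜ x = g2 x := by
  have hx : (x : X) ∉ S := Finset.mem_compl.mp x.2
  have h1 : glueF S g1 g2 ↑x = Option.map Subtype.val (g2 x) := by
    rw [glueF_not_mem hx]
  unfold resF
  rw [h1]
  cases hg : g2 x with
  | none => rfl
  | some z => simp [Finset.mem_compl.mp z.2]

theorem glueF_some_left {S : Finset X} {g1 : ↥S → Option ↥S} {g2 : ↥(Sᶜ) → Option ↥(Sᶜ)}
    {a : X} (ha : a ∈ S) {c : X} (hc : glueF S g1 g2 a = some c) :
    ∃ hcS : c ∈ S, g1 ⟨a, ha⟩ = some ⟨c, hcS⟩ := by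
  rw [glueF_mem ha] at hc
  cases hg : g1 ⟨a, ha⟩ with
  | none => rw [hg] at hc; simp at hc
  | some z =>
    rw [hg] at hc; simp only [Option.map_some] at hc
    injection hc with hc
    subst hc
    exact ⟨z.2, rfl⟩

theorem glueF_some_right {S : Finset X} {g1 : ↥S → Option ↥S} {g2 : ↥(Sᶜ) → Option ↥(Sᶜ)}
    {a : X} (ha : a ∉ S) {c : X} (hc : glueF S g1 g2 a = some c) :
    ∃ hcS : c ∈ Sᶜ, g2 ⟨a, Finset.mem_compl.mpr ha⟩ = some ⟨c, hcS⟩ := by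
  rw [glueF_not_mem ha] at hc
  cases hg : g2 ⟨a, _⟩ with
  | none => rw [hg] at hc; simp at hc
  | some z =>
    rw [hg] at hc; simp only [Option.map_some] at hc
    injection hc with hc
    subst hc
    exact ⟨z.2, rfl⟩

theorem PIg_glueF {S : Finset X} {g1 : ↥S → Option ↥S} {g2 : ↥(Sᶜ) → Option ↥(Sᶜ)}
    (h1 : PIg g1) (h2 : PIg g2) : PIg (glueF S g1 g2) := by
  intro a b c hac hbc
  by_cases ha : a ∈ S <;> by_cases hb : b ∈ S
  · obtain ⟨hcS, hga⟩ := glueF_some_left ha hac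
    obtain ⟨hcS', hgb⟩ := glueF_some_left hb hbc
    have hgb' : g1 ⟨b, hb⟩ = some ⟨c, hcS⟩ := hgb
    have := h1 ⟨a, ha⟩ ⟨b, hb⟩ ⟨c, hcS⟩ hga hgb'
    exact congrArg Subtype.val this
  · obtain ⟨hcS, _⟩ := glueF_some_left ha hac
    obtain ⟨hcS', _⟩ := glueF_some_right hb hbc
    exact absurd hcS (Finset.mem_compl.mp hcS')
  · obtain ⟨hcS, _⟩ := glueF_some_right ha hac
    obtain ⟨hcS', _⟩ := glueF_some_left hb hbc
    exact absurd hcS' (Finset.mem_compl.mp hcS)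
  · obtain ⟨hcS, hga⟩ := glueF_some_right ha hac
    obtain ⟨hcS', hgb⟩ := glueF_some_right hb hbc
    have hgb' : g2 ⟨b, Finset.mem_compl.mpr hb⟩ = some ⟨c, hcS⟩ := hgb
    have := h2 ⟨a, _⟩ ⟨b, _⟩ ⟨c, hcS⟩ hga hgb'
    exact congrArg Subtype.val this


theorem itg_glue_left {S : Finset X} {g1 : ↥S → Option ↥S} {g2 : ↥(Sᶜ) → Option ↥(Sᶜ)}
    (k : ℕ) (x : ↥S) :
    itg (glueF S g1 g2) k ↑x = Option.map Subtype.val (itg g1 k x) := by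
  have h := itg_resF (f := glueF S g1 g2) (S := S) closed_glueF_left k x
  rw [show resF (glueF S g1 g2) S = g1 from funext (resF_glueF_left)] at h
  exact h.symm

theorem itg_glue_right {S : Finset X} {g1 : ↥S → Option ↥S} {g2 : ↥(Sᶜ) → Option ↥(Sᶜ)}
    (k : ℕ) (x : ↥(Sᶜ)) :
    itg (glueF S g1 g2) k ↑x = Option.map Subtype.val (itg g2 k x) := by
  have h := itg_resF (f := glueF S g1 g2) (S := Sᶜ) closed_glueF_right k x
  rw [show resF (glueF S g1 g2) Sᶜ = g2 from funext (resF_glueF_right)] at h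
  exact h.symm

theorem itg_perm (π : Equiv.Perm X) (k : ℕ) (x : X) :
    itg (fun y => some (π y)) k x = some ((π ^ k) x) := by
  induction k generalizing x with
  | zero => simp [itg]
  | succ k ih =>
    show (some (π x)).bind _ = _
    simp only [Option.bind_some]
    rw [ih (π x), pow_succ]
    rfl

theorem cyc_no_die {g : X → Option X} (hg : NilB g) (x : X) : ¬ Cyc g x :=
  fun hc => cyc_not_dies g hc (hg x)

theorem cycSet_glue {C : Finset X} (π : Equiv.Perm ↥C) {γ : ↥(Cᶜ) → Option ↥(Cᶜ)}
    (hγ : NilB γ) : CycSet (glueF C (fun x => some (π x)) γ) = C := by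
  ext x
  rw [mem_cycSet]
  constructor
  · intro hcyc
    by_contra hx
    obtain ⟨k, hk, hit⟩ := hcyc
    rw [show x = ((⟨x, Finset.mem_compl.mpr hx⟩ : ↥(Cᶜ)) : X) from rfl, itg_glue_right] at hit
    cases hγ' : itg γ k ⟨x, Finset.mem_compl.mpr hx⟩ with
    | none => rw [hγ'] at hit; simp at hit
    | some z =>
      rw [hγ'] at hit
      simp only [Option.map_some] at hit
      injection hit with hit
      have hz : z = ⟨x, Finset.mem_compl.mpr hx⟩ := Subtype.ext hit
      subst hz
      exact cyc_no_die hγ _ ⟨k, hk, hγ'⟩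
  · intro hx
    refine ⟨orderOf π, orderOf_pos π, ?_⟩
    rw [show x = ((⟨x, hx⟩ : ↥C) : X) from rfl, itg_glue_left, itg_perm, pow_orderOf_eq_one]
    rfl

variable (X) in
/-- nilpotent partial injections -/
def NilPI := {f : X → Option X // PIg f ∧ NilB f}

instance : DecidablePred (PIg (X := X)) := fun _ =>
  inferInstanceAs (Decidable (∀ _ _ _, _ → _ → _))

instance : DecidablePred (NilB (X := X)) := fun _ =>
  inferInstanceAs (Decidable (∀ _, _ = _))

noncomputable instance : Fintype (NilPI X) := by unfold NilPI; exact Subtype.fintype _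

/-- the map realizing the fiber of the cycle-set decomposition -/
noncomputable def phiA (C : Finset X) :
    (Equiv.Perm ↥C) × NilPI ↥(Cᶜ) → {f : X → Option X // PIg f ∧ CycSet f = C} :=
  fun p => ⟨glueF C (fun x => some (p.1 x)) p.2.1,
    PIg_glueF (fun a b c hac hbc => by
      injection hac with hac; injection hbc with hbc
      exact p.1.injective (hac.trans hbc.symm)) p.2.2.1,
    cycSet_glue p.1 p.2.2.2⟩

theorem phiA_bijective (C : Finset X) : Function.Bijective (phiA (X := X) C) := by
  constructor
  · rintro ⟨π, γ⟩ ⟨π', γ'⟩ hEq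
    have hfun : glueF C (fun x => some (π x)) γ.1 = glueF C (fun x => some (π' x)) γ'.1 :=
      congrArg Subtype.val hEq
    have hπ : π = π' := by
      ext x
      have h1 := congrFun hfun ↑x
      rw [glueF_mem x.2, glueF_mem x.2] at h1
      simp only [Option.map_some] at h1
      injection h1
    have hγ : γ = γ' := by
      apply Subtype.ext
      funext x
      have h1 := congrFun hfun ↑x
      have hx : (x : X) ∉ C := Finset.mem_compl.mp x.2
      rw [glueF_not_mem hx, glueF_not_mem hx] at h1
      exact Option.map_injective Subtype.val_injective h1
    rw [hπ, hγ]
  · rintro ⟨f, hPI, hC⟩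
    subst hC
    have htot : ∀ x : ↥(CycSet f), ∃ y : ↥(CycSet f), f ↑x = some ↑y := by
      intro x
      have hx : Cyc f ↑x := mem_cycSet.mp x.2
      obtain ⟨y, hy, hcy⟩ := cyc_succ hx
      exact ⟨⟨y, mem_cycSet.mpr hcy⟩, hy⟩
    choose u hu using htot
    have huinj : Function.Injective u := by
      intro a b hab
      apply Subtype.ext
      apply hPI ↑a ↑b ↑(u a) (hu a)
      rw [hab]; exact hu b
    have hubij : Function.Bijective u :=
      (Fintype.bijective_iff_injective_and_card u).mpr ⟨huinj, rfl⟩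
    refine ⟨⟨Equiv.ofBijective u hubij,
      ⟨resF f (CycSet f)ᶜ, PIg_resF hPI, nilB_res_compl_cycSet hPI⟩⟩, ?_⟩
    apply Subtype.ext
    funext x
    show glueF (CycSet f) (fun y => some ((Equiv.ofBijective u hubij) y))
      (resF f (CycSet f)ᶜ) x = f x
    by_cases hx : x ∈ CycSet f
    · rw [glueF_mem hx]
      simp only [Option.map_some]
      exact (hu ⟨x, hx⟩).symm
    · rw [glueF_not_mem hx]
      exact map_val_resF (closed_cycSet_compl hPI) ⟨x, Finset.mem_compl.mpr hx⟩


theorem itg_one (f : X → Option X) (x : X) : itg f 1 x = f x := by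
  show (f x).bind _ = f x
  cases f x <;> rfl

/-- iterates of a partial injection are partially injective -/
theorem itg_inj {f : X → Option X} (hf : PIg f) (k : ℕ) :
    ∀ a b c, itg f k a = some c → itg f k b = some c → a = b := by
  induction k with
  | zero => intro a b c ha hb; cases ha; cases hb; rfl
  | succ k ih =>
    intro a b c ha hb
    cases hfa : f a with
    | none => unfold itg at ha; rw [hfa] at ha; simp at ha
    | some ya =>
      cases hfb : f b with
      | none => unfold itg at hb; rw [hfb] at hb; simp at hb
      | some yb =>
        unfold itg at ha hb
        rw [hfa] at ha; rw [hfb] at hb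
        simp only [Option.bind_some] at ha hb
        have : ya = yb := ih ya yb c ha hb
        subst this
        exact hf a b ya hfa hfb

/-- hitting times of a point with no successor are unique -/
theorem hit_unique {f : X → Option X} {o : X} (ho : f o = none) {x : X} {a b : ℕ}
    (ha : itg f a x = some o) (hb : itg f b x = some o) : a = b := by
  have key : ∀ a b : ℕ, a < b → itg f a x = some o → itg f b x = some o → False := by
    intro a b hab h1 h2
    have : itg f (a + (b - a)) x = some o := by
      rw [show a + (b - a) = b by omega]; exact h2
    rw [itg_add, h1] at this
    simp only [Option.bind_some] at this
    obtain ⟨t, ht⟩ : ∃ t, b - a = t + 1 := ⟨b - a - 1, by omega⟩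
    rw [ht] at this
    unfold itg at this
    rw [ho] at this
    simp at this
  rcases Nat.lt_trichotomy a b with h | h | h
  · exact absurd (key a b h ha hb) not_false
  · exact h
  · exact absurd (key b a h hb ha) not_false

open Classical in
/-- the set of points (other than `o`) that eventually reach `o` -/
noncomputable def Reach (o : X) (f : X → Option X) : Finset X :=
  Finset.univ.filter (fun x => x ≠ o ∧ ∃ k, 0 < k ∧ itg f k x = some o)

theorem mem_reach {o : X} {f : X → Option X} {x : X} :
    x ∈ Reach o f ↔ x ≠ o ∧ ∃ k, 0 < k ∧ itg f k x = some o := by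
  classical
  simp [Reach]

/-- building a partial map from chain data and residual data -/
noncomputable def psiF (o : X) (P : Finset X) (e : ↥P ≃ Fin P.card)
    (g : ↥((insert o P)ᶜ) → Option ↥((insert o P)ᶜ)) : X → Option X := fun x =>
  if hx : x ∈ P then
    (if (e ⟨x, hx⟩ : ℕ) = 0 then some o
     else some ↑(e.symm ⟨(e ⟨x, hx⟩ : ℕ) - 1, by have := (e ⟨x, hx⟩).isLt; omega⟩))
  else if hxo : x = o then none
  else Option.map Subtype.val
    (g ⟨x, by simp only [Finset.mem_compl, Finset.mem_insert]; tauto⟩)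

section Psi
variable {o : X} {P : Finset X} (hP : o ∉ P) {e : ↥P ≃ Fin P.card}
  {g : ↥((insert o P)ᶜ) → Option ↥((insert o P)ᶜ)}

include hP in
theorem psiF_o : psiF o P e g o = none := by
  unfold psiF
  rw [dif_neg (fun h => hP h), dif_pos rfl]

theorem psiF_mem {x : X} (hx : x ∈ P) :
    psiF o P e g x =
      (if (e ⟨x, hx⟩ : ℕ) = 0 then some o
       else some ↑(e.symm ⟨(e ⟨x, hx⟩ : ℕ) - 1, by have := (e ⟨x, hx⟩).isLt; omega⟩)) := by
  unfold psiF
  rw [dif_pos hx]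

theorem psiF_other {x : X} (hx : x ∉ insert o P) :
    psiF o P e g x = Option.map Subtype.val (g ⟨x, Finset.mem_compl.mpr hx⟩) := by
  have h1 : x ∉ P := fun h => hx (Finset.mem_insert_of_mem h)
  have h2 : x ≠ o := fun h => hx (h ▸ Finset.mem_insert_self _ _)
  unfold psiF
  rw [dif_neg h1, dif_neg h2]

include hP in
theorem psiF_PIg (hg : PIg g) : PIg (psiF o P e g) := by
  -- classify the image of each point
  have himg : ∀ a c, psiF o P e g a = some c →
      (∃ ha : a ∈ P, (c = o ∧ (e ⟨a, ha⟩ : ℕ) = 0) ∨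
        (∃ hlt : (e ⟨a, ha⟩ : ℕ) - 1 < P.card, (e ⟨a, ha⟩ : ℕ) ≠ 0 ∧
          c = ↑(e.symm ⟨(e ⟨a, ha⟩ : ℕ) - 1, hlt⟩))) ∨
      (∃ ha : a ∉ insert o P, ∃ hc : c ∈ (insert o P)ᶜ,
        g ⟨a, Finset.mem_compl.mpr ha⟩ = some ⟨c, hc⟩) := by
    intro a c hac
    by_cases ha : a ∈ P
    · left
      refine ⟨ha, ?_⟩
      rw [psiF_mem ha] at hac
      by_cases h0 : (e ⟨a, ha⟩ : ℕ) = 0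
      · rw [if_pos h0] at hac; injection hac with hac; exact Or.inl ⟨hac.symm, h0⟩
      · rw [if_neg h0] at hac; injection hac with hac
        exact Or.inr ⟨by have := (e ⟨a, ha⟩).isLt; omega, h0, hac.symm⟩
    · by_cases hao : a = o
      · subst hao; rw [psiF_o hP] at hac; exact absurd hac (by simp)
      · right
        have hains : a ∉ insert o P := by
          simp only [Finset.mem_insert]; tauto
        refine ⟨hains, ?_⟩
        rw [psiF_other hains] at hac
        cases hgz : g ⟨a, Finset.mem_compl.mpr hains⟩ with
        | none => rw [hgz] at hac; simp at hac
        | some z =>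
          rw [hgz] at hac; simp only [Option.map_some] at hac
          injection hac with hac
          subst hac
          exact ⟨z.2, rfl⟩
  intro a b c hac hbc
  rcases himg a c hac with ⟨ha, hca⟩ | ⟨ha, hc, hga⟩ <;>
    rcases himg b c hbc with ⟨hb, hcb⟩ | ⟨hb, hc', hgb⟩
  · -- both in the chain part
    rcases hca with ⟨hcoa, h0a⟩ | ⟨hlta, h0a, hca⟩
    · rcases hcb with ⟨hcob, h0b⟩ | ⟨hltb, h0b, hcb⟩
      · -- both map to o : indices both 0
        have : e ⟨a, ha⟩ = e ⟨b, hb⟩ := Fin.ext (by omega)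
        have := e.injective this
        exact congrArg Subtype.val this
      · exfalso
        have hmem : ((e.symm ⟨(e ⟨b, hb⟩ : ℕ) - 1, hltb⟩ : ↥P) : X) ∈ P :=
          (e.symm _).2
        rw [← hcb, hcoa] at hmem
        exact hP hmem
    · rcases hcb with ⟨hcob, h0b⟩ | ⟨hltb, h0b, hcb⟩
      · exfalso
        have hmem : ((e.symm ⟨(e ⟨a, ha⟩ : ℕ) - 1, hlta⟩ : ↥P) : X) ∈ P :=
          (e.symm _).2
        rw [← hca, hcob] at hmem
        exact hP hmem
      · -- both come via e.symm
        have : (e.symm ⟨(e ⟨a, ha⟩ : ℕ) - 1, hlta⟩ : ↥P)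
            = e.symm ⟨(e ⟨b, hb⟩ : ℕ) - 1, hltb⟩ :=
          Subtype.ext (hca ▸ hcb ▸ rfl)
        have h2 := e.symm.injective this
        have h3 : (e ⟨a, ha⟩ : ℕ) - 1 = (e ⟨b, hb⟩ : ℕ) - 1 := by
          have := congrArg Fin.val h2; exact this
        have : e ⟨a, ha⟩ = e ⟨b, hb⟩ := Fin.ext (by omega)
        exact congrArg Subtype.val (e.injective this)
  · -- chain image is in insert o P, g image is not
    exfalso
    apply Finset.mem_compl.mp hc'
    rcases hca with ⟨hcoa, _⟩ | ⟨hlta, _, hca⟩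
    · rw [hcoa]; exact Finset.mem_insert_self _ _
    · rw [hca]; exact Finset.mem_insert_of_mem (e.symm _).2
  · exfalso
    apply Finset.mem_compl.mp hc
    rcases hcb with ⟨hcob, _⟩ | ⟨hltb, _, hcb⟩
    · rw [hcob]; exact Finset.mem_insert_self _ _
    · rw [hcb]; exact Finset.mem_insert_of_mem (e.symm _).2
  · have : (⟨a, Finset.mem_compl.mpr ha⟩ : ↥((insert o P)ᶜ))
        = ⟨b, Finset.mem_compl.mpr hb⟩ := by
      apply hg _ _ ⟨c, hc⟩ hga
      rw [hgb]
    exact congrArg Subtype.val this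

include hP in
theorem psiF_chain_hits : ∀ i : ℕ, ∀ x : ↥P, (e x : ℕ) = i →
    itg (psiF o P e g) (i + 1) ↑x = some o := by
  intro i
  induction i with
  | zero =>
    intro x hx
    have hx' : (e ⟨↑x, x.2⟩ : ℕ) = 0 := hx
    rw [itg_one, psiF_mem x.2, if_pos hx']
  | succ i ih =>
    intro x hx
    have hlt : i < P.card := by have := (e x).isLt; omega
    have hx' : (e ⟨↑x, x.2⟩ : ℕ) = i + 1 := hx
    have hstep : psiF o P e g ↑x = some ↑(e.symm ⟨i, hlt⟩) := by
      rw [psiF_mem x.2, if_neg (by omega)]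
      have harg : ∀ (h : (e ⟨↑x, x.2⟩ : ℕ) - 1 < P.card),
          (⟨(e ⟨↑x, x.2⟩ : ℕ) - 1, h⟩ : Fin P.card) = ⟨i, hlt⟩ :=
        fun h => Fin.ext (by show (e ⟨↑x, x.2⟩ : ℕ) - 1 = i; omega)
      rw [harg]
    show (psiF o P e g ↑x).bind _ = some o
    rw [hstep]
    simp only [Option.bind_some]
    exact ih (e.symm ⟨i, hlt⟩) (by rw [Equiv.apply_symm_apply])

theorem closed_psiF_compl : ClosedF (psiF o P e g) ((insert o P)ᶜ) := by
  intro x hx y hy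
  rw [Finset.mem_compl] at hx
  rw [psiF_other hx] at hy
  cases hg' : g ⟨x, Finset.mem_compl.mpr hx⟩ with
  | none => rw [hg'] at hy; simp at hy
  | some z =>
    rw [hg'] at hy
    simp only [Option.map_some] at hy
    injection hy with hy
    subst hy
    exact z.2

theorem resF_psiF (x : ↥((insert o P)ᶜ)) :
    resF (psiF o P e g) ((insert o P)ᶜ) x = g x := by
  have hx : (x : X) ∉ insert o P := Finset.mem_compl.mp x.2
  unfold resF
  rw [psiF_other hx]
  cases hg' : g ⟨↑x, Finset.mem_compl.mpr hx⟩ with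
  | none => rfl
  | some z =>
    simp only [Option.map_some, Option.bind_some]
    rw [dif_pos z.2]

theorem itg_psiF_compl (k : ℕ) (x : ↥((insert o P)ᶜ)) :
    itg (psiF o P e g) k ↑x = Option.map Subtype.val (itg g k x) := by
  have h := itg_resF (f := psiF o P e g) closed_psiF_compl k x
  rw [show resF (psiF o P e g) ((insert o P)ᶜ) = g from funext resF_psiF] at h
  exact h.symm

include hP in
theorem psiF_nilB (hg : NilB g) : NilB (psiF o P e g) := by
  apply nilB_of_none (k := Fintype.card X + 2)
  intro x
  by_cases hx : x ∈ P
  · have h1 := psiF_chain_hits (g := g) hP (e ⟨x, hx⟩ : ℕ) ⟨x, hx⟩ rfl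
    have h2 : itg (psiF o P e g) ((e ⟨x, hx⟩ : ℕ) + 1 + 1) x = none := by
      rw [itg_succ', h1]
      simp only [Option.bind_some]
      exact psiF_o hP
    have := itg_none_add (psiF o P e g)
      (Fintype.card X + 2 - ((e ⟨x, hx⟩ : ℕ) + 2)) h2
    have hle : (e ⟨x, hx⟩ : ℕ) + 1 + 1 + (Fintype.card X + 2 - ((e ⟨x, hx⟩ : ℕ) + 2))
        = Fintype.card X + 2 := by
      have h3 := (e ⟨x, hx⟩).isLt
      have h4 : P.card ≤ Fintype.card X := by
        rw [← Finset.card_univ]; exact Finset.card_le_card (Finset.subset_univ P)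
      omega
    rwa [hle] at this
  · by_cases hxo : x = o
    · have h1 : itg (psiF o P e g) 1 x = none := by
        rw [itg_one, hxo]; exact psiF_o hP
      have := itg_none_add (psiF o P e g) (Fintype.card X + 1) h1
      rwa [show 1 + (Fintype.card X + 1) = Fintype.card X + 2 by omega] at this
    · have hxq : x ∉ insert o P := by simp only [Finset.mem_insert]; tauto
      set xq : ↥((insert o P)ᶜ) := ⟨x, Finset.mem_compl.mpr hxq⟩
      have h1 : itg g (Fintype.card ↥((insert o P)ᶜ)) xq = none := hg xq
      have h2 := itg_none_add g
        (Fintype.card X + 2 - Fintype.card ↥((insert o P)ᶜ)) h1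
      have hle : Fintype.card ↥((insert o P)ᶜ)
          + (Fintype.card X + 2 - Fintype.card ↥((insert o P)ᶜ))
          = Fintype.card X + 2 := by
        have h4 : Fintype.card ↥((insert o P)ᶜ) ≤ Fintype.card X :=
          Fintype.card_le_of_injective _ Subtype.val_injective
        omega
      rw [hle] at h2
      have := itg_psiF_compl (e := e) (g := g) (Fintype.card X + 2) xq
      rw [h2] at this
      exact this

include hP in
theorem psiF_reach : Reach o (psiF o P e g) = P := by
  ext x
  rw [mem_reach]
  constructor
  · rintro ⟨hxo, k, hk, hit⟩
    by_contra hx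
    have hxq : x ∉ insert o P := by simp only [Finset.mem_insert]; tauto
    have h := itg_psiF_compl (e := e) (g := g) k ⟨x, Finset.mem_compl.mpr hxq⟩
    rw [hit] at h
    cases hgk : itg g k ⟨x, Finset.mem_compl.mpr hxq⟩ with
    | none => rw [hgk] at h; simp at h
    | some z =>
      rw [hgk] at h
      simp only [Option.map_some] at h
      injection h with h
      have hz := Finset.mem_compl.mp z.2
      apply hz
      rw [← h]
      exact Finset.mem_insert_self _ _
  · intro hx
    exact ⟨fun h => hP (h ▸ hx), (e ⟨x, hx⟩ : ℕ) + 1, by omega,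
      psiF_chain_hits hP _ ⟨x, hx⟩ rfl⟩

end Psi

/-- the map realizing the fiber of the reach-set decomposition -/
noncomputable def psiA (o : X) (P : Finset X) (hP : o ∉ P) :
    ((↥P ≃ Fin P.card) × NilPI ↥((insert o P)ᶜ)) →
      {f : X → Option X // (PIg f ∧ NilB f ∧ f o = none) ∧ Reach o f = P} :=
  fun p => ⟨psiF o P p.1 p.2.1,
    ⟨⟨psiF_PIg hP p.2.2.1, psiF_nilB hP p.2.2.2, psiF_o hP⟩, psiF_reach hP⟩⟩

theorem psiA_bijective (o : X) (P : Finset X) (hP : o ∉ P) :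
    Function.Bijective (psiA o P hP) := by
  constructor
  · rintro ⟨e, γ⟩ ⟨e', γ'⟩ hEq
    have hfun : psiF o P e γ.1 = psiF o P e' γ'.1 := congrArg Subtype.val hEq
    have hγ : γ = γ' := by
      apply Subtype.ext
      funext x
      have hx : (x : X) ∉ insert o P := Finset.mem_compl.mp x.2
      have h1 := congrFun hfun ↑x
      rw [psiF_other hx, psiF_other hx] at h1
      exact Option.map_injective Subtype.val_injective h1
    have he : e = e' := by
      ext x
      have h1 := psiF_chain_hits (e := e) (g := γ.1) hP (e x : ℕ) x rfl
      have h2 := psiF_chain_hits (e := e') (g := γ'.1) hP (e' x : ℕ) x rfl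
      rw [hfun] at h1
      have ho : psiF o P e' γ'.1 o = none := psiF_o hP
      have := hit_unique ho h1 h2
      omega
    rw [he, hγ]
  · rintro ⟨f, ⟨hPI, hNil, ho⟩, hR⟩
    -- hitting times
    have hhit : ∀ x : ↥P, ∃ m, itg f (m + 1) ↑x = some o := by
      intro x
      have := mem_reach.mp (hR ▸ x.2 : (x : X) ∈ Reach o f)
      obtain ⟨hxo, k, hk, hit⟩ := this
      exact ⟨k - 1, by rwa [show k - 1 + 1 = k by omega]⟩
    choose d hd using hhit
    -- step lemma
    have hstep : ∀ (x : ↥P) (m : ℕ), d x = m + 1 →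
        ∃ y : ↥P, f ↑x = some ↑y ∧ d y = m := by
      intro x m hm
      have h1 : itg f (m + 1 + 1) ↑x = some o := by rw [← hm]; exact hd x
      cases hfx : f ↑x with
      | none =>
        unfold itg at h1; rw [hfx] at h1; simp at h1
      | some y =>
        unfold itg at h1; rw [hfx] at h1
        simp only [Option.bind_some] at h1
        have hyo : y ≠ o := by
          intro hy
          subst hy
          obtain ⟨t, ht⟩ : ∃ t, m + 1 = t + 1 := ⟨m, rfl⟩
          rw [ht] at h1
          unfold itg at h1
          rw [ho] at h1
          simp at h1
        have hyP : y ∈ P := by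
          rw [← hR, mem_reach]
          exact ⟨hyo, m + 1, by omega, h1⟩
        refine ⟨⟨y, hyP⟩, rfl, ?_⟩
        have := hd ⟨y, hyP⟩
        exact Nat.succ_injective (hit_unique ho this h1)
    -- downward closure
    have hdc : ∀ m, ∀ x : ↥P, d x = m → ∀ i, i ≤ m → ∃ y : ↥P, d y = i := by
      intro m
      induction m with
      | zero => intro x hx i hi; exact ⟨x, by omega⟩
      | succ m ih =>
        intro x hx i hi
        obtain ⟨y, _, hy⟩ := hstep x m hx
        rcases Nat.lt_or_ge i (m + 1) with h | h
        · exact ih y hy i (by omega)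
        · exact ⟨x, by omega⟩
    -- injectivity of d
    have hdinj : ∀ a b : ↥P, d a = d b → a = b := by
      intro a b hab
      apply Subtype.ext
      apply itg_inj hPI (d a + 1) ↑a ↑b o (hd a)
      rw [hab]; exact hd b
    -- bound
    have hdlt : ∀ x : ↥P, d x < P.card := by
      intro x
      by_contra hge
      have h : ∀ i : Fin (d x + 1), ∃ y : ↥P, d y = (i : ℕ) :=
        fun i => hdc (d x) x rfl i (by omega)
      choose u hu using h
      have huinj : Function.Injective u := by
        intro i j hij
        apply Fin.ext
        rw [← hu i, ← hu j, hij]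
      have := Fintype.card_le_of_injective u huinj
      simp only [Fintype.card_fin, Fintype.card_coe] at this
      omega
    set ef : ↥P → Fin P.card := fun x => ⟨d x, hdlt x⟩ with hef
    have hefinj : Function.Injective ef := by
      intro a b hab
      exact hdinj a b (by injection hab)
    have hefbij : Function.Bijective ef :=
      (Fintype.bijective_iff_injective_and_card ef).mpr
        ⟨hefinj, by simp [Fintype.card_coe]⟩
    -- closure of the complement
    have hcl : ClosedF f ((insert o P)ᶜ) := by
      intro x hx y hy
      rw [Finset.mem_compl, Finset.mem_insert, not_or] at hx ⊢
      obtain ⟨hxo, hxP⟩ := hx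
      constructor
      · intro hyo
        subst hyo
        apply hxP
        rw [← hR, mem_reach]
        exact ⟨hxo, 1, one_pos, by rwa [itg_one]⟩
      · intro hyP
        apply hxP
        rw [← hR, mem_reach]
        refine ⟨hxo, d ⟨y, hyP⟩ + 1 + 1, by omega, ?_⟩
        show (f x).bind _ = some o
        rw [hy]
        simp only [Option.bind_some]
        exact hd ⟨y, hyP⟩
    refine ⟨⟨Equiv.ofBijective ef hefbij,
      ⟨resF f ((insert o P)ᶜ), PIg_resF hPI, NilB_resF hcl hNil⟩⟩, ?_⟩
    apply Subtype.ext
    show psiF o P (Equiv.ofBijective ef hefbij) (resF f ((insert o P)ᶜ)) = f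
    funext x
    by_cases hx : x ∈ P
    · rw [psiF_mem hx]
      have hex : ((Equiv.ofBijective ef hefbij) ⟨x, hx⟩ : ℕ) = d ⟨x, hx⟩ := rfl
      by_cases h0 : d ⟨x, hx⟩ = 0
      · rw [if_pos (by rw [hex]; exact h0)]
        have := hd ⟨x, hx⟩
        rw [h0, itg_one] at this
        exact this.symm
      · rw [if_neg (by rw [hex]; exact h0)]
        obtain ⟨m, hm⟩ : ∃ m, d ⟨x, hx⟩ = m + 1 := ⟨d ⟨x, hx⟩ - 1, by omega⟩
        obtain ⟨y, hfy, hdy⟩ := hstep ⟨x, hx⟩ m hm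
        rw [hfy]
        congr 1
        have : (Equiv.ofBijective ef hefbij) y = ⟨m, by rw [← hdy]; exact hdlt y⟩ :=
          Fin.ext (by show d y = m; exact hdy)
        have h2 : (Equiv.ofBijective ef hefbij).symm ⟨m, by rw [← hdy]; exact hdlt y⟩ = y := by
          rw [← this, Equiv.symm_apply_apply]
        have h3 : (⟨((Equiv.ofBijective ef hefbij) ⟨x, hx⟩ : ℕ) - 1, by
            have := ((Equiv.ofBijective ef hefbij) ⟨x, hx⟩).isLt; omega⟩ : Fin P.card)
            = ⟨m, by rw [← hdy]; exact hdlt y⟩ := by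
          apply Fin.ext
          show ((Equiv.ofBijective ef hefbij) ⟨x, hx⟩ : ℕ) - 1 = m
          rw [hex, hm]
          omega
        rw [h3, h2]
    · by_cases hxo : x = o
      · subst hxo
        rw [psiF_o (fun h => hx h), ho]
      · have hxq : x ∉ insert o P := by simp only [Finset.mem_insert]; tauto
        rw [psiF_other hxq]
        exact map_val_resF hcl ⟨x, Finset.mem_compl.mpr hxq⟩

section Transport
variable {Y : Type*} [DecidableEq Y] [Fintype Y] (ε : X ≃ Y)

def conjF (f : X → Option X) : Y → Option Y := fun y => Option.map ε (f (ε.symm y))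

theorem itg_conjF (f : X → Option X) (k : ℕ) (y : Y) :
    itg (conjF ε f) k y = Option.map ε (itg f k (ε.symm y)) := by
  induction k generalizing y with
  | zero => simp [itg]
  | succ k ih =>
    show (conjF ε f y).bind _ = Option.map ε ((f (ε.symm y)).bind _)
    cases hz : f (ε.symm y) with
    | none =>
      rw [show conjF ε f y = none from by unfold conjF; rw [hz]; rfl]
      rfl
    | some z =>
      rw [show conjF ε f y = some (ε z) from by unfold conjF; rw [hz]; rfl]
      simp only [Option.bind_some]
      rw [ih (ε z), Equiv.symm_apply_apply]

theorem PIg_conjF {f : X → Option X} (hf : PIg f) : PIg (conjF ε f) := by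
  intro a b c hac hbc
  rw [conjF, Option.map_eq_some_iff] at hac hbc
  obtain ⟨za, hza, hza2⟩ := hac
  obtain ⟨zb, hzb, hzb2⟩ := hbc
  have : za = zb := ε.injective (hza2.trans hzb2.symm)
  subst this
  have := hf _ _ za hza hzb
  calc a = ε (ε.symm a) := (ε.apply_symm_apply a).symm
    _ = ε (ε.symm b) := by rw [this]
    _ = b := ε.apply_symm_apply b

theorem NilB_conjF {f : X → Option X} (hf : NilB f) : NilB (conjF ε f) := by
  intro y
  rw [itg_conjF, show Fintype.card Y = Fintype.card X from Fintype.card_congr ε.symm,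
    hf (ε.symm y)]
  rfl

noncomputable def nilPIEquiv : NilPI X ≃ NilPI Y where
  toFun f := ⟨conjF ε f.1, PIg_conjF ε f.2.1, NilB_conjF ε f.2.2⟩
  invFun g := ⟨conjF ε.symm g.1, PIg_conjF ε.symm g.2.1, NilB_conjF ε.symm g.2.2⟩
  left_inv f := by
    apply Subtype.ext
    funext x
    show Option.map ε.symm (Option.map ε (f.1 (ε.symm (ε x)))) = f.1 x
    rw [Equiv.symm_apply_apply, Option.map_map]
    simp
  right_inv g := by
    apply Subtype.ext
    funext y
    show Option.map ε (Option.map ε.symm (g.1 (ε (ε.symm y)))) = g.1 y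
    rw [Equiv.apply_symm_apply, Option.map_map]
    simp

end Transport

open Classical in
/-- the domain of a partial map -/
noncomputable def DomSet (f : X → Option X) : Finset X :=
  Finset.univ.filter (fun x => f x ≠ none)

theorem mem_domSet {f : X → Option X} {x : X} : x ∈ DomSet f ↔ f x ≠ none := by
  classical
  simp [DomSet]

noncomputable def thetaA (D : Finset X) :
    (↥D ↪ X) → {f : X → Option X // PIg f ∧ DomSet f = D} := fun u =>
  ⟨fun x => if hx : x ∈ D then some (u ⟨x, hx⟩) else none, by
    intro a b c hac hbc
    replace hac : (if hx : a ∈ D then some (u ⟨a, hx⟩) else none) = some c := hac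
    replace hbc : (if hx : b ∈ D then some (u ⟨b, hx⟩) else none) = some c := hbc
    by_cases ha : a ∈ D
    · by_cases hb : b ∈ D
      · rw [dif_pos ha] at hac; rw [dif_pos hb] at hbc
        injection hac with hac; injection hbc with hbc
        have : (⟨a, ha⟩ : ↥D) = ⟨b, hb⟩ := u.injective (hac.trans hbc.symm)
        exact congrArg Subtype.val this
      · rw [dif_neg hb] at hbc; exact absurd hbc (by simp)
    · rw [dif_neg ha] at hac; exact absurd hac (by simp), by
    ext x
    rw [mem_domSet]
    by_cases hx : x ∈ D
    · simp [hx]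
    · simp [hx]⟩

theorem thetaA_bijective (D : Finset X) : Function.Bijective (thetaA (X := X) D) := by
  constructor
  · intro u u' hEq
    have hfun := congrArg Subtype.val hEq
    ext x
    have h1 := congrFun hfun ↑x
    replace h1 : (if hx : ↑x ∈ D then some (u ⟨↑x, hx⟩) else none)
        = (if hx : ↑x ∈ D then some (u' ⟨↑x, hx⟩) else none) := h1
    rw [dif_pos x.2, dif_pos x.2] at h1
    exact Option.some_injective _ h1
  · rintro ⟨f, hPI, hD⟩
    have htot : ∀ x : ↥D, ∃ y, f ↑x = some y := by
      intro x
      have := mem_domSet.mp (hD ▸ x.2 : (x : X) ∈ DomSet f)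
      cases hf : f ↑x with
      | none => exact absurd hf this
      | some y => exact ⟨y, rfl⟩
    choose u hu using htot
    have huinj : Function.Injective u := by
      intro a b hab
      apply Subtype.ext
      apply hPI ↑a ↑b (u a) (hu a)
      rw [hab]; exact hu b
    refine ⟨⟨u, huinj⟩, ?_⟩
    apply Subtype.ext
    funext x
    show (if hx : x ∈ D then some (u ⟨x, hx⟩) else none) = f x
    by_cases hx : x ∈ D
    · rw [dif_pos hx]; exact (hu ⟨x, hx⟩).symm
    · rw [dif_neg hx]
      by_contra hne
      have : f x ≠ none := fun h => hne h.symm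
      exact hx (hD ▸ mem_domSet.mpr this)

variable (X) in
/-- number of nilpotent partial injections on `t` points -/
noncomputable def nilc (t : ℕ) : ℕ := Fintype.card (NilPI (Fin t))

theorem card_nilPI_coe (S : Finset X) :
    Fintype.card (NilPI ↥S) = nilc S.card := by
  have ε : ↥S ≃ Fin S.card := Fintype.equivFinOfCardEq (Fintype.card_coe S)
  exact Fintype.card_congr (nilPIEquiv ε)

open Classical in
theorem card_PIg_eq_sum_emb :
    Fintype.card {f : X → Option X // PIg f}
      = ∑ D ∈ (Finset.univ : Finset X).powerset,
          (Fintype.card X).descFactorial D.card := by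
  classical
  rw [Fintype.card_subtype]
  rw [Finset.card_eq_sum_card_fiberwise
    (f := fun f : X → Option X => DomSet f)
    (t := (Finset.univ : Finset X).powerset)
    (fun f _ => Finset.mem_powerset.mpr (Finset.subset_univ _))]
  refine Finset.sum_congr rfl fun D _ => ?_
  rw [Finset.filter_filter]
  have h1 : (Finset.univ.filter fun f : X → Option X => PIg f ∧ DomSet f = D).card
      = Fintype.card {f : X → Option X // PIg f ∧ DomSet f = D} :=
    (Fintype.card_subtype _).symm
  rw [h1, ← Fintype.card_of_bijective (thetaA_bijective D),
    Fintype.card_embedding_eq, Fintype.card_coe]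

open Classical in
theorem card_PIg_eq_sum_cyc :
    Fintype.card {f : X → Option X // PIg f}
      = ∑ C ∈ (Finset.univ : Finset X).powerset,
          C.card.factorial * nilc ((Cᶜ : Finset X).card) := by
  classical
  rw [Fintype.card_subtype]
  rw [Finset.card_eq_sum_card_fiberwise
    (f := fun f : X → Option X => CycSet f)
    (t := (Finset.univ : Finset X).powerset)
    (fun f _ => Finset.mem_powerset.mpr (Finset.subset_univ _))]
  refine Finset.sum_congr rfl fun C _ => ?_
  rw [Finset.filter_filter]
  have h1 : (Finset.univ.filter fun f : X → Option X => PIg f ∧ CycSet f = C).card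
      = Fintype.card {f : X → Option X // PIg f ∧ CycSet f = C} :=
    (Fintype.card_subtype _).symm
  rw [h1, ← Fintype.card_of_bijective (phiA_bijective C), Fintype.card_prod,
    Fintype.card_perm, Fintype.card_coe, card_nilPI_coe]

open Classical in
theorem card_nilpSink (o : X) :
    Fintype.card {f : X → Option X // PIg f ∧ NilB f ∧ f o = none}
      = ∑ P ∈ (Finset.univ.erase o).powerset,
          P.card.factorial * nilc (((insert o P)ᶜ : Finset X).card) := by
  classical
  rw [Fintype.card_subtype]
  rw [Finset.card_eq_sum_card_fiberwise
    (f := fun f : X → Option X => Reach o f)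
    (t := (Finset.univ.erase o).powerset)
    (fun f _ => Finset.mem_powerset.mpr (fun x hx =>
      Finset.mem_erase.mpr ⟨(mem_reach.mp hx).1, Finset.mem_univ x⟩))]
  refine Finset.sum_congr rfl fun P hP => ?_
  have hoP : o ∉ P := fun h => by
    have := Finset.mem_powerset.mp hP h
    exact (Finset.mem_erase.mp this).1 rfl
  rw [Finset.filter_filter]
  have h1 : (Finset.univ.filter
      fun f : X → Option X => (PIg f ∧ NilB f ∧ f o = none) ∧ Reach o f = P).card
      = Fintype.card {f : X → Option X //
          (PIg f ∧ NilB f ∧ f o = none) ∧ Reach o f = P} :=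
    (Fintype.card_subtype _).symm
  have h2 : (Finset.univ.filter
      fun f : X → Option X => (PIg f ∧ NilB f ∧ f o = none) ∧ Reach o f = P)
      = (Finset.univ.filter
      fun f : X → Option X => (PIg f ∧ NilB f ∧ f o = none) ∧ Reach o f = P) := rfl
  rw [show (Finset.univ.filter
      fun f : X → Option X => (PIg f ∧ NilB f ∧ f o = none) ∧ Reach o f = P).card
      = Fintype.card {f : X → Option X //
          (PIg f ∧ NilB f ∧ f o = none) ∧ Reach o f = P} from
    (Fintype.card_subtype _).symm]
  rw [← Fintype.card_of_bijective (psiA_bijective o P hoP), Fintype.card_prod,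
    Fintype.card_equiv (Fintype.equivFinOfCardEq (Fintype.card_coe P)),
    Fintype.card_coe, card_nilPI_coe]

end Gen

theorem iterMap_eq_itg (n : ℕ) (f : Fin n → Option (Fin n)) (k : ℕ) (x : Fin n) :
    iterMap n f k x = itg f k x := by
  induction k generalizing x with
  | zero => rfl
  | succ k ih =>
    show (f x).bind (iterMap n f k) = (f x).bind (itg f k)
    cases f x with
    | none => rfl
    | some y => simp only [Option.bind_some]; exact ih y

theorem nilpotent_iff {n : ℕ} (α : PInj n) : Nilpotent n α ↔ NilB α.val := by
  constructor
  · rintro ⟨k, hk, hall⟩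
    exact (nil_iff α.val).mp
      ⟨k, hk, fun x => (iterMap_eq_itg n α.val k x).symm.trans (hall x)⟩
  · intro hb
    obtain ⟨k, hk, hall⟩ := (nil_iff α.val).mpr hb
    exact ⟨k, hk, fun x => (iterMap_eq_itg n α.val k x).trans (hall x)⟩

theorem stmt14 (n : ℕ) (h : 0 < n) :
    Set.ncard {α : PInj n | Nilpotent n α ∧ α.val ⟨0, h⟩ = none}
      = ∑ j ∈ Finset.range (n - 1 + 1), ((n - 1).choose j) ^ 2 * j.factorial := by
  classical
  obtain ⟨o, ho⟩ : ∃ o : Fin n, o = ⟨0, h⟩ := ⟨⟨0, h⟩, rfl⟩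
  rw [show {α : PInj n | Nilpotent n α ∧ α.val ⟨0, h⟩ = none}
    = {α : PInj n | Nilpotent n α ∧ α.val o = none} from by rw [ho]]
  -- step 1 : convert to a Fintype.card over raw functions
  have h1 : {α : PInj n | Nilpotent n α ∧ α.val o = none}.ncard
      = Fintype.card {f : Fin n → Option (Fin n) // PIg f ∧ NilB f ∧ f o = none} := by
    rw [← Nat.card_coe_set_eq, ← Nat.card_eq_fintype_card]
    refine Nat.card_congr ⟨fun a => ⟨a.1.1, a.1.2, (nilpotent_iff a.1).mp a.2.1, a.2.2⟩,
      fun b => ⟨⟨b.1, b.2.1⟩, (nilpotent_iff ⟨b.1, b.2.1⟩).mpr b.2.2.1, b.2.2.2⟩,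
      fun a => rfl, fun b => rfl⟩
  have hcard_erase : ((Finset.univ : Finset (Fin n)).erase o).card = n - 1 := by
    rw [Finset.card_erase_of_mem (Finset.mem_univ o), Finset.card_univ, Fintype.card_fin]
  -- step 2 : fiber decomposition over Reach
  have h2 : Fintype.card {f : Fin n → Option (Fin n) // PIg f ∧ NilB f ∧ f o = none}
      = ∑ j ∈ Finset.range (n - 1 + 1),
          (n - 1).choose j * (j.factorial * nilc (n - 1 - j)) := by
    rw [card_nilpSink o]
    have hstep : ∀ P ∈ ((Finset.univ : Finset (Fin n)).erase o).powerset,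
        P.card.factorial * nilc (((insert o P)ᶜ : Finset (Fin n)).card)
          = (fun j => j.factorial * nilc (n - 1 - j)) P.card := by
      intro P hP
      have hPsub := Finset.mem_powerset.mp hP
      have hoP : o ∉ P := fun hmem => (Finset.mem_erase.mp (hPsub hmem)).1 rfl
      have hle : P.card ≤ n - 1 := by
        rw [← hcard_erase]; exact Finset.card_le_card hPsub
      have hcc : ((insert o P)ᶜ : Finset (Fin n)).card = n - 1 - P.card := by
        rw [Finset.card_compl, Finset.card_insert_of_notMem hoP, Fintype.card_fin]
        clear h1 ho hP hPsub hoP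
        omega
      show P.card.factorial * nilc (((insert o P)ᶜ : Finset (Fin n)).card)
        = P.card.factorial * nilc (n - 1 - P.card)
      rw [hcc]
    have e2 := Finset.sum_powerset_apply_card
      (x := (Finset.univ : Finset (Fin n)).erase o)
      (fun j => j.factorial * nilc (n - 1 - j))
    rw [hcard_erase] at e2
    calc ∑ P ∈ ((Finset.univ : Finset (Fin n)).erase o).powerset,
          P.card.factorial * nilc (((insert o P)ᶜ : Finset (Fin n)).card)
        = ∑ P ∈ ((Finset.univ : Finset (Fin n)).erase o).powerset,
            (fun j => j.factorial * nilc (n - 1 - j)) P.card :=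
          Finset.sum_congr rfl hstep
      _ = ∑ j ∈ Finset.range (n - 1 + 1),
            (n - 1).choose j • (fun j => j.factorial * nilc (n - 1 - j)) j := e2
      _ = ∑ j ∈ Finset.range (n - 1 + 1),
            (n - 1).choose j * (j.factorial * nilc (n - 1 - j)) :=
          Finset.sum_congr rfl (fun j _ => smul_eq_mul (α := ℕ) _ _)
  -- step 3 : the two decompositions of |IS_{n-1}|
  have h3 : ∑ j ∈ Finset.range (n - 1 + 1),
        (n - 1).choose j * (j.factorial * nilc (n - 1 - j))
      = ∑ j ∈ Finset.range (n - 1 + 1), ((n - 1).choose j) ^ 2 * j.factorial := by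
    have hcyc := card_PIg_eq_sum_cyc (X := Fin (n - 1))
    have hemb := card_PIg_eq_sum_emb (X := Fin (n - 1))
    have huniv : ((Finset.univ : Finset (Fin (n - 1)))).card = n - 1 := by
      rw [Finset.card_univ, Fintype.card_fin]
    have hcyc' : Fintype.card {f : Fin (n - 1) → Option (Fin (n - 1)) // PIg f}
        = ∑ j ∈ Finset.range (n - 1 + 1),
            (n - 1).choose j * (j.factorial * nilc (n - 1 - j)) := by
      rw [hcyc]
      have hstep : ∀ C ∈ ((Finset.univ : Finset (Fin (n - 1)))).powerset,
          C.card.factorial * nilc ((Cᶜ : Finset (Fin (n - 1))).card)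
            = (fun j => j.factorial * nilc (n - 1 - j)) C.card := by
        intro C hC
        rw [Finset.card_compl, Fintype.card_fin]
      have e2 := Finset.sum_powerset_apply_card
        (x := (Finset.univ : Finset (Fin (n - 1))))
        (fun j => j.factorial * nilc (n - 1 - j))
      rw [huniv] at e2
      calc ∑ C ∈ ((Finset.univ : Finset (Fin (n - 1)))).powerset,
            C.card.factorial * nilc ((Cᶜ : Finset (Fin (n - 1))).card)
          = ∑ C ∈ ((Finset.univ : Finset (Fin (n - 1)))).powerset,
              (fun j => j.factorial * nilc (n - 1 - j)) C.card :=
            Finset.sum_congr rfl hstep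
        _ = ∑ j ∈ Finset.range (n - 1 + 1),
              (n - 1).choose j • (fun j => j.factorial * nilc (n - 1 - j)) j := e2
        _ = ∑ j ∈ Finset.range (n - 1 + 1),
              (n - 1).choose j * (j.factorial * nilc (n - 1 - j)) :=
            Finset.sum_congr rfl (fun j _ => smul_eq_mul (α := ℕ) _ _)
    have hemb' : Fintype.card {f : Fin (n - 1) → Option (Fin (n - 1)) // PIg f}
        = ∑ j ∈ Finset.range (n - 1 + 1), ((n - 1).choose j) ^ 2 * j.factorial := by
      rw [hemb]
      have e2 := Finset.sum_powerset_apply_card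
        (x := (Finset.univ : Finset (Fin (n - 1))))
        (fun j => (Fintype.card (Fin (n - 1))).descFactorial j)
      rw [huniv] at e2
      calc ∑ D ∈ ((Finset.univ : Finset (Fin (n - 1)))).powerset,
            (Fintype.card (Fin (n - 1))).descFactorial D.card
          = ∑ j ∈ Finset.range (n - 1 + 1),
              (n - 1).choose j • (fun j => (Fintype.card (Fin (n - 1))).descFactorial j) j :=
            e2
        _ = ∑ j ∈ Finset.range (n - 1 + 1), ((n - 1).choose j) ^ 2 * j.factorial := by
            refine Finset.sum_congr rfl fun j _ => ?_
            show (n - 1).choose j • (Fintype.card (Fin (n - 1))).descFactorial j = _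
            rw [smul_eq_mul, Fintype.card_fin, Nat.descFactorial_eq_factorial_mul_choose]
            ring
    rw [← hcyc', hemb']
  rw [h1, h2, h3]
end

section
/- Let T_n be the number of nilpotent elements of IS_n, and L_n the total number of chains in chain decompositions of all elements of IS_n. Then T_n = L_n / n, i.e., n * T_n = L_n. -/
namespace Zproof

variable {n : ℕ}

lemma iter_add (f : Fin n → Option (Fin n)) (a b : ℕ) (x : Fin n) :
    iterMap n f (a + b) x = (iterMap n f a x).bind (iterMap n f b) := by
  induction a generalizing x with
  | zero => simp [iterMap]
  | succ a ih =>
    have : a + 1 + b = (a + b) + 1 := by omega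
    rw [this]
    show (f x).bind (iterMap n f (a+b)) = ((f x).bind (iterMap n f a)).bind (iterMap n f b)
    rw [Option.bind_assoc]
    cases f x with
    | none => simp
    | some y => simp [ih]

lemma iter_mono {f g : Fin n → Option (Fin n)} (h : ∀ x y, f x = some y → g x = some y) :
    ∀ k x y, iterMap n f k x = some y → iterMap n g k x = some y := by
  intro k
  induction k with
  | zero => intro x y hx; exact hx
  | succ k ih =>
    intro x y hx
    simp only [iterMap] at hx ⊢
    rcases hfx : f x with _ | z
    · rw [hfx] at hx; simp at hx
    · rw [hfx] at hx
      simp only [Option.bind_some] at hx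
      rw [h x z hfx]
      simpa using ih z y hx
lemma iter_inj (α : PInj n) :
    ∀ k a b c, iterMap n α.val k a = some c → iterMap n α.val k b = some c → a = b := by
  intro k
  induction k with
  | zero => intro a b c ha hb; simp [iterMap] at ha hb; rw [ha, hb]
  | succ k ih =>
    intro a b c ha hb
    rcases hfa : α.val a with _ | ya
    · simp [iterMap, hfa] at ha
    rcases hfb : α.val b with _ | yb
    · simp [iterMap, hfb] at hb
    simp only [iterMap, hfa, hfb, Option.bind_some] at ha hb
    have : ya = yb := ih ya yb c ha hb
    exact α.property a b ya hfa (this ▸ hfb)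

lemma no_cycle {α : PInj n} (h : Nilpotent n α) :
    ∀ k x, 0 < k → iterMap n α.val k x ≠ some x := by
  rintro k x hk hcyc
  obtain ⟨k0, hk0, hnil⟩ := h
  have hrep : ∀ m, iterMap n α.val (k * m) x = some x := by
    intro m
    induction m with
    | zero => simp [iterMap]
    | succ m ih =>
      have : k * (m + 1) = k * m + k := by ring
      rw [this, iter_add, ih, Option.bind_some, hcyc]
  have hge : k0 ≤ k * k0 := Nat.le_mul_of_pos_left k0 hk
  have : iterMap n α.val (k * k0) x = none := by
    obtain ⟨r, hr⟩ := Nat.exists_eq_add_of_le hge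
    rw [hr, iter_add, hnil x, Option.bind_none]
  rw [hrep k0] at this
  exact nomatch this

lemma nilpotent_of_no_cycle (α : PInj n)
    (h : ∀ k x, 0 < k → iterMap n α.val k x ≠ some x) :
    ∀ x, iterMap n α.val (n + 1) x = none := by
    intro x
    by_contra hne
    have hall : ∀ k ≤ n + 1, iterMap n α.val k x ≠ none := by
      intro k hk hkeq
      obtain ⟨r, hr⟩ := Nat.exists_eq_add_of_le hk
      exact hne (by rw [hr, iter_add, hkeq, Option.bind_none])
    have hsome : ∀ k : Fin (n + 2), ∃ y, iterMap n α.val k.val x = some y := by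
      intro k
      rcases hv : iterMap n α.val k.val x with _ | y
      · exact absurd hv (hall k.val (by omega))
      · exact ⟨y, rfl⟩
    choose g hg using hsome
    have hninj : ¬ Function.Injective g := by
      intro hinj
      have := Fintype.card_le_of_injective g hinj
      simp at this
    have key : ∀ i j : Fin (n + 2), i < j → g i = g j → False := by
      intro i j hlt hgij
      have h1 : iterMap n α.val i.val x = some (g i) := hg i
      have h2 : iterMap n α.val j.val x = some (g i) := by rw [hgij]; exact hg j
      have hj : j.val = i.val + (j.val - i.val) := by omega
      rw [hj, iter_add, h1, Option.bind_some] at h2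
      exact h (j.val - i.val) (g i) (by omega) h2
    rw [Function.not_injective_iff] at hninj
    obtain ⟨i, j, hij, hne'⟩ := hninj
    rcases Ne.lt_or_gt hne' with hlt | hlt
    · exact key i j hlt hij
    · exact key j i hlt hij.symm

lemma nil_iff (α : PInj n) :
    Nilpotent n α ↔ ∀ x, iterMap n α.val (n + 1) x = none :=
  ⟨fun h => nilpotent_of_no_cycle α (no_cycle h),
   fun h => ⟨n + 1, Nat.succ_pos n, h⟩⟩

instance : DecidablePred (Nilpotent n) := fun α =>
  decidable_of_iff _ (nil_iff α).symm

def domF (α : PInj n) : Finset (Fin n) := Finset.univ.filter (fun x => α.val x ≠ none)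

def imF (α : PInj n) : Finset (Fin n) := Finset.univ.filter (fun v => ∃ u, α.val u = some v)

lemma mem_domF {α : PInj n} {x : Fin n} : x ∈ domF α ↔ α.val x ≠ none := by
  simp [domF]

lemma mem_imF {α : PInj n} {v : Fin n} : v ∈ imF α ↔ ∃ u, α.val u = some v := by
  simp [imF]

lemma card_imF (α : PInj n) : (imF α).card = (domF α).card := by
  symm
  apply Finset.card_bij (fun u (hu : u ∈ domF α) =>
    (α.val u).get (by rwa [← Option.ne_none_iff_isSome, ← mem_domF]))
  · intro u hu
    rw [mem_imF]
    exact ⟨u, (Option.some_get _).symm ▸ rfl⟩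
  · intro a ha b hb hab
    have hsa : (α.val a).isSome := by
      rw [← Option.ne_none_iff_isSome]; exact mem_domF.mp ha
    have hsb : (α.val b).isSome := by
      rw [← Option.ne_none_iff_isSome]; exact mem_domF.mp hb
    have hag : α.val a = some ((α.val a).get hsa) := (Option.some_get hsa).symm
    have hbg : α.val b = some ((α.val b).get hsb) := (Option.some_get hsb).symm
    exact α.property a b _ hag (by rw [hbg]; exact congrArg some hab.symm)
  · intro v hv
    obtain ⟨u, hu⟩ := mem_imF.mp hv
    refine ⟨u, mem_domF.mpr (by simp [hu]), ?_⟩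
    simp [hu]

def restr (α : PInj n) (d : Fin n) : PInj n :=
  ⟨fun x => if x = d then none else α.val x, by
    intro a b c ha hb
    by_cases hA : a = d
    · simp [hA] at ha
    · by_cases hB : b = d
      · simp [hB] at hb
      · simp only [hA, if_false, ite_false] at ha
        simp only [hB, if_false, ite_false] at hb
        exact α.property a b c ha hb⟩

lemma restr_sub {α : PInj n} {d x y : Fin n} (h : (restr α d).val x = some y) :
    α.val x = some y := by
  by_cases hx : x = d
  · simp [restr, hx] at h
  · simpa [restr, hx] using h

lemma restr_nilpotent {α : PInj n} (h : Nilpotent n α) (d : Fin n) :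
    Nilpotent n (restr α d) := by
  obtain ⟨k, hk, hnil⟩ := h
  refine ⟨k, hk, fun x => ?_⟩
  rcases hv : iterMap n (restr α d).val k x with _ | y
  · rfl
  · have := iter_mono (fun x y => restr_sub) k x y hv
    rw [hnil x] at this
    exact nomatch this

lemma domF_restr (α : PInj n) (d : Fin n) : domF (restr α d) = (domF α).erase d := by
  ext x
  rw [mem_domF, Finset.mem_erase, mem_domF]
  by_cases hx : x = d <;> simp [restr, hx]

def updP (α : PInj n) (d v : Fin n) : PInj n :=
  if h : IsPInj n (Function.update α.val d (some v)) then ⟨_, h⟩ else α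

lemma updP_isPInj {α : PInj n} {d v : Fin n} (hv : v ∉ imF α) :
    IsPInj n (Function.update α.val d (some v)) := by
  intro a b c ha hb
  by_cases hA : a = d <;> by_cases hB : b = d
  · rw [hA, hB]
  · rw [hA, Function.update_self] at ha
    rw [Function.update_of_ne hB] at hb
    cases ha
    exact absurd (mem_imF.mpr ⟨b, hb⟩) hv
  · rw [hB, Function.update_self] at hb
    rw [Function.update_of_ne hA] at ha
    cases hb
    exact absurd (mem_imF.mpr ⟨a, ha⟩) hv
  · rw [Function.update_of_ne hA] at ha
    rw [Function.update_of_ne hB] at hb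
    exact α.property a b c ha hb

lemma updP_val {α : PInj n} {d v : Fin n} (hv : v ∉ imF α) :
    (updP α d v).val = Function.update α.val d (some v) := by
  exact congrArg Subtype.val
    (show updP α d v = ⟨_, updP_isPInj hv⟩ from dif_pos (updP_isPInj hv))

def Reach (α : PInj n) (d v : Fin n) : Prop := ∃ j, iterMap n α.val j v = some d

lemma exists_start {α : PInj n} (h : Nilpotent n α) (d : Fin n) :
    ∃ s, Reach α d s ∧ s ∉ imF α := by
  by_contra hc
  push_neg at hc
  have claim : ∀ k, ∃ v, iterMap n α.val k v = some d := by
    intro k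
    induction k with
    | zero => exact ⟨d, rfl⟩
    | succ k ih =>
      obtain ⟨v, hv⟩ := ih
      obtain ⟨u, hu⟩ := mem_imF.mp (hc v ⟨k, hv⟩)
      refine ⟨u, ?_⟩
      show (α.val u).bind (iterMap n α.val k) = some d
      rw [hu, Option.bind_some, hv]
  obtain ⟨k0, hk0, hnil⟩ := h
  obtain ⟨v, hv⟩ := claim k0
  rw [hnil v] at hv
  exact nomatch hv

lemma start_unique {α : PInj n} {d s s' : Fin n}
    (hs : Reach α d s ∧ s ∉ imF α) (hs' : Reach α d s' ∧ s' ∉ imF α) : s = s' := by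
  -- key : if j ≤ j' then s' reaches s, hence s' = s (else s in image)
  have key : ∀ a b : Fin n, a ∉ imF α → b ∉ imF α →
      ∀ j j', j ≤ j' → iterMap n α.val j a = some d → iterMap n α.val j' b = some d → a = b := by
    intro a b ha hb j j' hle hja hjb
    have hdecomp : iterMap n α.val ((j' - j) + j) b = some d := by
      rwa [Nat.sub_add_cancel hle]
    rw [iter_add] at hdecomp
    rcases hw : iterMap n α.val (j' - j) b with _ | w
    · rw [hw] at hdecomp; simp at hdecomp
    rw [hw, Option.bind_some] at hdecomp
    have hwa : w = a := iter_inj α j w a d hdecomp hja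
    subst hwa
    rcases Nat.eq_zero_or_pos (j' - j) with h0 | hpos
    · rw [h0] at hw
      exact (Option.some_inj.mp hw).symm
    · obtain ⟨t, ht⟩ := Nat.exists_eq_add_of_lt hpos
      rw [ht, Nat.zero_add, iter_add] at hw
      rcases hw' : iterMap n α.val t b with _ | w'
      · rw [hw'] at hw; simp at hw
      rw [hw', Option.bind_some] at hw
      have himw : α.val w' = some w := by
        simp only [iterMap] at hw
        rcases hval : α.val w' with _ | z
        · rw [hval] at hw; simp at hw
        · rw [hval] at hw
          simp only [Option.bind_some, iterMap] at hw
          exact hw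
      exact absurd (mem_imF.mpr ⟨w', himw⟩) ha
  obtain ⟨⟨j, hj⟩, him⟩ := hs
  obtain ⟨⟨j', hj'⟩, him'⟩ := hs'
  rcases le_total j j' with hle | hle
  · exact key s s' him him' j j' hle hj hj'
  · exact (key s' s him' him j' j hle hj' hj).symm

lemma iter_eq_of_avoid {A A' : Fin n → Option (Fin n)} {d : Fin n}
    (hAA : ∀ x, x ≠ d → A x = A' x) :
    ∀ k z, (∀ t, t < k → iterMap n A t z ≠ some d) → iterMap n A' k z = iterMap n A k z := by
  intro k
  induction k with
  | zero => intro z _; rfl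
  | succ k ih =>
    intro z havoid
    have hz : z ≠ d := by
      intro hzd
      exact havoid 0 (Nat.succ_pos k) (by rw [hzd]; rfl)
    show (A' z).bind (iterMap n A' k) = (A z).bind (iterMap n A k)
    rw [← hAA z hz]
    rcases hAz : A z with _ | w
    · rfl
    · simp only [Option.bind_some]
      apply ih
      intro t ht
      have := havoid (t + 1) (by omega)
      show iterMap n A t w ≠ some d
      intro hcon
      apply this
      show (A z).bind (iterMap n A t) = some d
      rw [hAz, Option.bind_some, hcon]

lemma updP_val_d {α : PInj n} {d v : Fin n} (hv : v ∉ imF α) :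
    (updP α d v).val d = some v := by
  rw [updP_val hv, Function.update_self]

lemma updP_val_ne {α : PInj n} {d v x : Fin n} (hv : v ∉ imF α) (hx : x ≠ d) :
    (updP α d v).val x = α.val x := by
  rw [updP_val hv, Function.update_of_ne hx]

lemma domF_updP {α : PInj n} {d v : Fin n} (hv : v ∉ imF α) :
    domF (updP α d v) = insert d (domF α) := by
  ext x
  by_cases hx : x = d
  · subst hx
    simp [mem_domF, updP_val_d hv]
  · simp [mem_domF, updP_val_ne hv hx, hx, Finset.mem_insert]

lemma restr_updP {α : PInj n} {d v : Fin n} (hd : α.val d = none) (hv : v ∉ imF α) :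
    restr (updP α d v) d = α := by
  apply Subtype.ext
  funext x
  by_cases hx : x = d
  · subst hx; simp [restr, hd]
  · simp only [restr, hx, if_false, ite_false]
    exact updP_val_ne hv hx

lemma updP_nilpotent {α : PInj n} {d v : Fin n} (hnil : Nilpotent n α)
    (hd : α.val d = none) (hv : v ∉ imF α) (hnr : ¬ Reach α d v) :
    Nilpotent n (updP α d v) := by
  set A := (updP α d v).val with hA
  have hAA : ∀ x, x ≠ d → A x = α.val x := fun x hx => updP_val_ne hv hx
  refine ⟨n + 1, Nat.succ_pos n, nilpotent_of_no_cycle _ ?_⟩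
  intro k z hk hcyc
  by_cases hpass : ∃ t, t < k ∧ iterMap n A t z = some d
  · obtain ⟨t, ht, htd⟩ := hpass
    have hkd : iterMap n A k d = some d := by
      have e1 : iterMap n A (t + k) z = iterMap n A k d := by
        rw [iter_add, htd, Option.bind_some]
      have e2 : iterMap n A (k + t) z = some d := by
        rw [iter_add, hcyc, Option.bind_some, htd]
      rw [Nat.add_comm t k] at e1
      rw [← e1, e2]
    have hAd : A d = some v := updP_val_d hv
    have hk1 : iterMap n A (k - 1) v = some d := by
      have : k = 1 + (k - 1) := by omega
      rw [this, iter_add] at hkd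
      have h1 : iterMap n A 1 d = some v := by
        show (A d).bind (iterMap n A 0) = some v
        rw [hAd, Option.bind_some]
        rfl
      rwa [h1, Option.bind_some] at hkd
    have hex : ∃ j, iterMap n A j v = some d := ⟨k - 1, hk1⟩
    set j := Nat.find hex with hj
    have hjd : iterMap n A j v = some d := Nat.find_spec hex
    have hmin : ∀ t, t < j → iterMap n A t v ≠ some d := fun t ht => Nat.find_min hex ht
    have : iterMap n α.val j v = some d := by
      rw [iter_eq_of_avoid hAA j v hmin] at *
      exact hjd
    exact hnr ⟨j, this⟩
  · push_neg at hpass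
    have : iterMap n α.val k z = some z := by
      rw [iter_eq_of_avoid hAA k z hpass]
      exact hcyc
    exact no_cycle hnil k z hk this

def emptyP (n : ℕ) : PInj n := ⟨fun _ => none, fun _ _ _ h => nomatch h⟩

lemma emptyP_nilpotent : Nilpotent n (emptyP n) := ⟨1, one_pos, fun _ => rfl⟩

lemma domF_emptyP : domF (emptyP n) = ∅ := by
  ext x; rw [mem_domF]; simp [emptyP]

lemma eq_emptyP {α : PInj n} (h : domF α = ∅) : α = emptyP n := by
  apply Subtype.ext
  funext x
  have hx : α.val x = none := by
    by_contra hx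
    exact absurd (h ▸ mem_domF.mpr hx) (Finset.notMem_empty x)
  exact hx

lemma nil_fiber_card (D : Finset (Fin n)) :
    (Finset.univ.filter (fun α : PInj n => Nilpotent n α ∧ domF α = D)).card
      = (n - 1).descFactorial D.card := by
  classical
  induction D using Finset.induction_on with
  | empty =>
    have hset : (Finset.univ.filter (fun α : PInj n => Nilpotent n α ∧ domF α = ∅))
        = {emptyP n} := by
      ext α
      simp only [Finset.mem_filter, Finset.mem_univ, true_and, Finset.mem_singleton]
      constructor
      · rintro ⟨-, hdom⟩
        exact eq_emptyP hdom
      · rintro rfl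
        exact ⟨emptyP_nilpotent, domF_emptyP⟩
    rw [hset, Finset.card_singleton, Finset.card_empty, Nat.descFactorial_zero]
  | @insert a s ha ih =>
    have hmap : ∀ α ∈ Finset.univ.filter
        (fun α : PInj n => Nilpotent n α ∧ domF α = insert a s),
        restr α a ∈ Finset.univ.filter (fun α : PInj n => Nilpotent n α ∧ domF α = s) := by
      intro α hα
      rw [Finset.mem_filter] at hα
      obtain ⟨-, hnil, hdom⟩ := hα
      rw [Finset.mem_filter]
      exact ⟨Finset.mem_univ _, restr_nilpotent hnil a,
        by rw [domF_restr, hdom, Finset.erase_insert ha]⟩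
    rw [Finset.card_eq_sum_card_fiberwise hmap]
    have hfib : ∀ α' ∈ Finset.univ.filter (fun α : PInj n => Nilpotent n α ∧ domF α = s),
        ((Finset.univ.filter (fun α : PInj n => Nilpotent n α ∧ domF α = insert a s)).filter
          (fun α => restr α a = α')).card = n - s.card - 1 := by
      intro α' hα'
      rw [Finset.mem_filter] at hα'
      obtain ⟨-, hnil', hdom'⟩ := hα'
      have hd : α'.val a = none := by
        by_contra hd
        exact ha (hdom' ▸ mem_domF.mpr hd)
      obtain ⟨sp, hsp⟩ := exists_start hnil' a
      have hclaim : (Finset.univ.filter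
            (fun α : PInj n => Nilpotent n α ∧ domF α = insert a s)).filter
            (fun α => restr α a = α')
          = (insert sp (imF α'))ᶜ.image (fun v => updP α' a v) := by
        ext α
        simp only [Finset.mem_filter, Finset.mem_univ, true_and, Finset.mem_image,
          Finset.mem_compl, Finset.mem_insert, not_or]
        constructor
        · rintro ⟨⟨hnilα, hdomα⟩, hres⟩
          have hav : α.val a ≠ none := by
            rw [← mem_domF, hdomα]
            exact Finset.mem_insert_self a s
          rcases hv : α.val a with _ | v
          · exact absurd hv hav
          have hvim : v ∉ imF α' := by
            intro hvim
            obtain ⟨u, hu⟩ := mem_imF.mp hvim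
            have hua : u ≠ a := fun h => by rw [h, hd] at hu; exact nomatch hu
            have hαu : α.val u = some v := by
              rw [← hres] at hu
              exact restr_sub hu
            exact hua (α.property u a v hαu hv)
          have hvsp : v ≠ sp := by
            intro hvsp
            obtain ⟨j, hj⟩ := hsp.1
            have hj' : iterMap n α.val j sp = some a := by
              refine iter_mono (fun x y hxy => ?_) j sp a hj
              rw [← hres] at hxy
              exact restr_sub hxy
            have : iterMap n α.val (j + 1) a = some a := by
              rw [Nat.add_comm, iter_add]
              have h1a : iterMap n α.val 1 a = some v := by
                show (α.val a).bind (iterMap n α.val 0) = some v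
                rw [hv]; rfl
              rw [h1a, Option.bind_some, hvsp, hj']
            exact no_cycle hnilα (j + 1) a (by omega) this
          refine ⟨v, ⟨hvsp, hvim⟩, ?_⟩
          have hfun : Function.update α'.val a (some v) = α.val := by
            funext x
            by_cases hx : x = a
            · subst hx; rw [Function.update_self, hv]
            · rw [Function.update_of_ne hx, ← hres]
              simp [restr, hx]
          have hP : IsPInj n (Function.update α'.val a (some v)) := hfun ▸ α.property
          exact (show updP α' a v = ⟨_, hP⟩ from dif_pos hP).trans (Subtype.ext hfun)
        · rintro ⟨v, ⟨hvsp, hvim⟩, rfl⟩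
          have hnr : ¬ Reach α' a v := fun hr => hvsp (start_unique ⟨hr, hvim⟩ hsp)
          refine ⟨⟨updP_nilpotent hnil' hd hvim hnr, ?_⟩, restr_updP hd hvim⟩
          rw [domF_updP hvim, hdom']
      rw [hclaim, Finset.card_image_of_injOn, Finset.card_compl,
        Finset.card_insert_of_notMem hsp.2, card_imF, hdom']
      · simp only [Fintype.card_fin]
        omega
      · intro v1 h1 v2 h2 heq
        simp only [Finset.coe_compl, Set.mem_compl_iff, Finset.coe_insert, Set.mem_insert_iff,
          Finset.mem_coe, not_or] at h1 h2
        have e1 : (updP α' a v1).val a = some v1 := updP_val_d h1.2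
        have e2 : (updP α' a v2).val a = some v2 := updP_val_d h2.2
        have heq' : updP α' a v1 = updP α' a v2 := heq
        rw [heq', e2] at e1
        exact (Option.some_inj.mp e1).symm
    rw [Finset.sum_congr rfl hfib, Finset.sum_const, ih, smul_eq_mul,
      Finset.card_insert_of_notMem ha, Nat.descFactorial_succ]
    have : n - s.card - 1 = n - 1 - s.card := by omega
    rw [this, Nat.mul_comm]

lemma all_fiber_card (D : Finset (Fin n)) :
    (Finset.univ.filter (fun α : PInj n => domF α = D)).card
      = n.descFactorial D.card := by
  classical
  induction D using Finset.induction_on with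
  | empty =>
    have hset : (Finset.univ.filter (fun α : PInj n => domF α = ∅)) = {emptyP n} := by
      ext α
      simp only [Finset.mem_filter, Finset.mem_univ, true_and, Finset.mem_singleton]
      exact ⟨eq_emptyP, fun h => h ▸ domF_emptyP⟩
    rw [hset, Finset.card_singleton, Finset.card_empty, Nat.descFactorial_zero]
  | @insert a s ha ih =>
    have hmap : ∀ α ∈ Finset.univ.filter (fun α : PInj n => domF α = insert a s),
        restr α a ∈ Finset.univ.filter (fun α : PInj n => domF α = s) := by
      intro α hα
      rw [Finset.mem_filter] at hα
      rw [Finset.mem_filter]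
      exact ⟨Finset.mem_univ _, by rw [domF_restr, hα.2, Finset.erase_insert ha]⟩
    rw [Finset.card_eq_sum_card_fiberwise hmap]
    have hfib : ∀ α' ∈ Finset.univ.filter (fun α : PInj n => domF α = s),
        ((Finset.univ.filter (fun α : PInj n => domF α = insert a s)).filter
          (fun α => restr α a = α')).card = n - s.card := by
      intro α' hα'
      rw [Finset.mem_filter] at hα'
      obtain ⟨-, hdom'⟩ := hα'
      have hd : α'.val a = none := by
        by_contra hd
        exact ha (hdom' ▸ mem_domF.mpr hd)
      have hclaim : (Finset.univ.filter (fun α : PInj n => domF α = insert a s)).filter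
            (fun α => restr α a = α')
          = (imF α')ᶜ.image (fun v => updP α' a v) := by
        ext α
        simp only [Finset.mem_filter, Finset.mem_univ, true_and, Finset.mem_image,
          Finset.mem_compl]
        constructor
        · rintro ⟨hdomα, hres⟩
          have hav : α.val a ≠ none := by
            rw [← mem_domF, hdomα]
            exact Finset.mem_insert_self a s
          rcases hv : α.val a with _ | v
          · exact absurd hv hav
          have hvim : v ∉ imF α' := by
            intro hvim
            obtain ⟨u, hu⟩ := mem_imF.mp hvim
            have hua : u ≠ a := fun h => by rw [h, hd] at hu; exact nomatch hu
            have hαu : α.val u = some v := by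
              rw [← hres] at hu
              exact restr_sub hu
            exact hua (α.property u a v hαu hv)
          refine ⟨v, hvim, ?_⟩
          have hfun : Function.update α'.val a (some v) = α.val := by
            funext x
            by_cases hx : x = a
            · subst hx; rw [Function.update_self, hv]
            · rw [Function.update_of_ne hx, ← hres]
              simp [restr, hx]
          have hP : IsPInj n (Function.update α'.val a (some v)) := hfun ▸ α.property
          exact (show updP α' a v = ⟨_, hP⟩ from dif_pos hP).trans (Subtype.ext hfun)
        · rintro ⟨v, hvim, rfl⟩
          refine ⟨?_, restr_updP hd hvim⟩
          rw [domF_updP hvim, hdom']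
      rw [hclaim, Finset.card_image_of_injOn, Finset.card_compl, card_imF, hdom',
        Fintype.card_fin]
      intro v1 h1 v2 h2 heq
      simp only [Finset.coe_compl, Set.mem_compl_iff, Finset.mem_coe] at h1 h2
      have e1 : (updP α' a v1).val a = some v1 := updP_val_d h1
      have e2 : (updP α' a v2).val a = some v2 := updP_val_d h2
      have heq' : updP α' a v1 = updP α' a v2 := heq
      rw [heq', e2] at e1
      exact (Option.some_inj.mp e1).symm
    rw [Finset.sum_congr rfl hfib, Finset.sum_const, ih, smul_eq_mul,
      Finset.card_insert_of_notMem ha, Nat.descFactorial_succ, Nat.mul_comm]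

end Zproof

open Zproof in
theorem stmt15 (n : ℕ) :
    n * Set.ncard {α : PInj n | Nilpotent n α} = ∑ α : PInj n, (n - domCard n α) := by
  classical
  have hset : {α : PInj n | Nilpotent n α}
      = ↑(Finset.univ.filter (fun α : PInj n => Nilpotent n α)) := by
    ext α; simp
  rw [hset, Set.ncard_coe_finset]
  have hL : (Finset.univ.filter (fun α : PInj n => Nilpotent n α)).card
      = ∑ D : Finset (Fin n), (n - 1).descFactorial D.card := by
    rw [Finset.card_eq_sum_card_fiberwise
      (fun (α : PInj n) (_ : α ∈ Finset.univ.filter (fun α : PInj n => Nilpotent n α)) =>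
        Finset.mem_univ (domF α))]
    apply Finset.sum_congr rfl
    intro D _
    rw [Finset.filter_filter]
    exact nil_fiber_card D
  have hR : (∑ α : PInj n, (n - domCard n α))
      = ∑ D : Finset (Fin n), (n - D.card) * n.descFactorial D.card := by
    rw [← Finset.sum_fiberwise_of_maps_to
      (fun (α : PInj n) (_ : α ∈ (Finset.univ : Finset (PInj n))) => Finset.mem_univ (domF α))
      (fun α => n - domCard n α)]
    apply Finset.sum_congr rfl
    intro D _
    have hterm : ∀ α ∈ Finset.univ.filter (fun α : PInj n => domF α = D),
        (n - domCard n α) = n - D.card := by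
      intro α hα
      rw [Finset.mem_filter] at hα
      rw [show domCard n α = (domF α).card from rfl, hα.2]
    rw [Finset.sum_congr rfl hterm, Finset.sum_const, all_fiber_card, smul_eq_mul,
      Nat.mul_comm]
  rw [hL, hR, Finset.mul_sum]
  apply Finset.sum_congr rfl
  intro D _
  cases n with
  | zero => simp
  | succ m =>
    rw [Nat.succ_sub_one, ← Nat.succ_descFactorial_succ, Nat.descFactorial_succ]
end
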